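/- Let G be a linearly ordered group which is not densely ordered, and let τ be a Hausdorff topology on 𝓑(G) such that for every s ∈ 𝓑(G) the left translation x ↦ s·x and the right translation x ↦ x·s are continuous. Then the topological space (𝓑(G), τ) is discrete. -/

import Mathlib

/-- The multiplication of the bicyclic extension `𝓑(G) = G × G` of a linearly ordered
group `G`: `(a,b)·(c,d) = (c·b⁻¹·a, d)` if `b < c`; `(a,d)` if `b = c`;
`(a, b·c⁻¹·d)` if `b > c`. -/
def bmul {G : Type*} [Group G] [LinearOrder G] (s t : G × G) : G × G :=
  if s.2 < t.1 then (t.1 * s.2⁻¹ * s.1, t.2)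
  else if s.2 = t.1 then (s.1, t.2)
  else (s.1, s.2 * t.1⁻¹ * t.2)

section Aux

variable {G : Type*} [Group G] [LinearOrder G]

lemma bmul_of_lt {s t : G × G} (h : s.2 < t.1) :
    bmul s t = (t.1 * s.2⁻¹ * s.1, t.2) := by simp [bmul, h]

lemma bmul_of_eq {s t : G × G} (h : s.2 = t.1) :
    bmul s t = (s.1, t.2) := by simp [bmul, h]

lemma bmul_of_gt {s t : G × G} (h : t.1 < s.2) :
    bmul s t = (s.1, s.2 * t.1⁻¹ * t.2) := by simp [bmul, h.not_gt, h.ne']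

end Aux

/-- Theorem 3.6 for `𝓑(G)`: if a linearly ordered group `G` is not densely ordered,
then every Hausdorff topology on `𝓑(G)` with separately continuous multiplication
is discrete. -/
theorem not_densely_ordered_implies_discrete {G : Type*} [Group G] [LinearOrder G]
    [CovariantClass G G (· * ·) (· ≤ ·)]
    [CovariantClass G G (Function.swap (· * ·)) (· ≤ ·)]
    (hnd : ¬ ∀ g : G, 1 < g → ∃ h : G, 1 < h ∧ h < g)
    [TopologicalSpace (G × G)] [T2Space (G × G)]
    (hl : ∀ s : G × G, Continuous fun x : G × G => bmul s x)
    (hr : ∀ s : G × G, Continuous fun x : G × G => bmul x s) :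
    DiscreteTopology (G × G) := by
  push_neg at hnd
  obtain ⟨u, hu, hmin⟩ := hnd
  -- general order helpers
  have gen1 : ∀ x y : G, x < y → (1 : G) < y * x⁻¹ := by
    intro x y h
    simpa using mul_lt_mul_left h x⁻¹
  have gen3 : ∀ x y : G, (1 : G) < x → y < x * y := by
    intro x y h
    simpa using mul_lt_mul_left h y
  have gen4 : ∀ x y : G, (1 : G) < y → x < x * y := by
    intro x y h
    simpa using mul_lt_mul_right h x
  -- `u` is the least element `> 1`; key consequences:
  have hsucc : ∀ x y : G, x < y → x * u ≤ y := by
    intro x y h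
    have h1 : (1 : G) < x⁻¹ * y := by
      have := mul_lt_mul_right h x⁻¹
      simpa using this
    have h2 : u ≤ x⁻¹ * y := hmin _ h1
    have := mul_le_mul_right h2 x
    simpa [mul_assoc] using this
  have hle : ∀ g : G, u * g ≤ g * u := by
    intro g
    have h1 : (1 : G) < g * u * g⁻¹ := by
      have h0 : g < g * u := gen4 g u hu
      simpa using mul_lt_mul_left h0 g⁻¹
    have h2 : u ≤ g * u * g⁻¹ := hmin _ h1
    have := mul_le_mul_left h2 g
    simpa [mul_assoc] using this
  have hcomm : ∀ g : G, u * g = g * u := by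
    intro g
    refine le_antisymm (hle g) ?_
    have h2 := mul_le_mul_left (mul_le_mul_right (hle g⁻¹) g) g
    simpa [mul_assoc] using h2
  have hcommi : ∀ g : G, u⁻¹ * g = g * u⁻¹ := by
    intro g
    have h2 := congrArg (fun z : G => z⁻¹) (hcomm g⁻¹)
    simpa [mul_inv_rev] using h2.symm
  rw [discreteTopology_iff_isOpen_singleton]
  rintro ⟨a, b⟩
  -- The retraction `E` onto the upper quadrant at `(a,b)`.
  set E : G × G → G × G := fun x => bmul (a, a) (bmul x (b, b)) with hEdef
  have hEcont : Continuous E := (hl (a, a)).comp (hr (b, b))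
  set F : G × G → G × G := fun x => bmul (a * u, a) (bmul (a, a * u) (E x)) with hFdef
  have hFcont : Continuous F := (hl (a * u, a)).comp ((hl (a, a * u)).comp hEcont)
  set F' : G × G → G × G := fun x => bmul (bmul (E x) (b * u, b)) (b, b * u) with hF'def
  have hF'cont : Continuous F' := (hr (b, b * u)).comp ((hr (b * u, b)).comp hEcont)
  set L0 : G × G → G × G := fun x => bmul (1, a * u⁻¹) x with hL0def
  have hL0cont : Continuous L0 := hl _
  -- Bounds and characterization for E
  have hE : ∀ c d : G, a ≤ (E (c, d)).1 ∧ b ≤ (E (c, d)).2 ∧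
      (E (c, d) = (a, b) → (c = a ∧ d = b) ∨ (d < b ∧ b * d⁻¹ * c = a)) := by
    intro c d
    rcases lt_trichotomy d b with h | h | h
    · have e1 : bmul ((c, d) : G × G) (b, b) = (b * d⁻¹ * c, b) :=
        bmul_of_lt (show ((c, d) : G × G).2 < ((b, b) : G × G).1 from h)
      rcases lt_trichotomy a (b * d⁻¹ * c) with h2 | h2 | h2
      · have e2 : E (c, d) = (b * d⁻¹ * c, b) := by
          rw [hEdef]; dsimp only; rw [e1,
            bmul_of_lt (show ((a, a) : G × G).2 < ((b * d⁻¹ * c, b) : G × G).1 from h2)]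
          simp [mul_assoc]
        rw [e2]
        exact ⟨h2.le, le_refl b, fun hh => absurd (congrArg Prod.fst hh) (by simpa using h2.ne')⟩
      · have e2 : E (c, d) = (a, b) := by
          rw [hEdef]; dsimp only; rw [e1,
            bmul_of_eq (show ((a, a) : G × G).2 = ((b * d⁻¹ * c, b) : G × G).1 from h2)]
        rw [e2]
        exact ⟨le_refl a, le_refl b, fun _ => Or.inr ⟨h, h2.symm⟩⟩
      · have e2 : E (c, d) = (a, a * (b * d⁻¹ * c)⁻¹ * b) := by
          rw [hEdef]; dsimp only; rw [e1,
            bmul_of_gt (show ((b * d⁻¹ * c, b) : G × G).1 < ((a, a) : G × G).2 from h2)]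
        rw [e2]
        have hb2 : b < a * (b * d⁻¹ * c)⁻¹ * b := gen3 _ b (gen1 _ _ h2)
        exact ⟨le_refl a, hb2.le, fun hh =>
          absurd (congrArg Prod.snd hh) (by simpa using hb2.ne')⟩
    · have e1 : bmul ((c, d) : G × G) (b, b) = (c, b) :=
        bmul_of_eq (show ((c, d) : G × G).2 = ((b, b) : G × G).1 from h)
      rcases lt_trichotomy a c with h2 | h2 | h2
      · have e2 : E (c, d) = (c, b) := by
          rw [hEdef]; dsimp only; rw [e1,
            bmul_of_lt (show ((a, a) : G × G).2 < ((c, b) : G × G).1 from h2)]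
          simp [mul_assoc]
        rw [e2]
        exact ⟨h2.le, le_refl b, fun hh => absurd (congrArg Prod.fst hh) (by simpa using h2.ne')⟩
      · have e2 : E (c, d) = (a, b) := by
          rw [hEdef]; dsimp only; rw [e1,
            bmul_of_eq (show ((a, a) : G × G).2 = ((c, b) : G × G).1 from h2)]
        rw [e2]
        exact ⟨le_refl a, le_refl b, fun _ => Or.inl ⟨h2.symm, h⟩⟩
      · have e2 : E (c, d) = (a, a * c⁻¹ * b) := by
          rw [hEdef]; dsimp only; rw [e1,
            bmul_of_gt (show ((c, b) : G × G).1 < ((a, a) : G × G).2 from h2)]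
        rw [e2]
        have hb2 : b < a * c⁻¹ * b := gen3 _ b (gen1 _ _ h2)
        exact ⟨le_refl a, hb2.le, fun hh =>
          absurd (congrArg Prod.snd hh) (by simpa using hb2.ne')⟩
    · have e1 : bmul ((c, d) : G × G) (b, b) = (c, d) := by
        rw [bmul_of_gt (show ((b, b) : G × G).1 < ((c, d) : G × G).2 from h)]
        simp [mul_assoc]
      rcases lt_trichotomy a c with h2 | h2 | h2
      · have e2 : E (c, d) = (c, d) := by
          rw [hEdef]; dsimp only; rw [e1,
            bmul_of_lt (show ((a, a) : G × G).2 < ((c, d) : G × G).1 from h2)]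
          simp [mul_assoc]
        rw [e2]
        exact ⟨h2.le, h.le, fun hh => absurd (congrArg Prod.fst hh) (by simpa using h2.ne')⟩
      · have e2 : E (c, d) = (a, d) := by
          rw [hEdef]; dsimp only; rw [e1,
            bmul_of_eq (show ((a, a) : G × G).2 = ((c, d) : G × G).1 from h2)]
        rw [e2]
        exact ⟨le_refl a, h.le, fun hh => absurd (congrArg Prod.snd hh) (by simpa using h.ne')⟩
      · have e2 : E (c, d) = (a, a * c⁻¹ * d) := by
          rw [hEdef]; dsimp only; rw [e1,
            bmul_of_gt (show ((c, d) : G × G).1 < ((a, a) : G × G).2 from h2)]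
        rw [e2]
        have hb2 : b < a * c⁻¹ * d := h.trans (gen3 _ d (gen1 _ _ h2))
        exact ⟨le_refl a, hb2.le, fun hh =>
          absurd (congrArg Prod.snd hh) (by simpa using hb2.ne')⟩
  -- If first coordinate exceeds `a`, the up-down shift fixes the point.
  have hUD : ∀ p q : G, a < p → bmul (a * u, a) (bmul (a, a * u) (p, q)) = (p, q) := by
    intro p q h
    have h2 : a * u ≤ p := hsucc a p h
    rcases eq_or_lt_of_le h2 with h3 | h3
    · have e1 : bmul ((a, a * u) : G × G) (p, q) = (a, q) :=
        bmul_of_eq (show ((a, a * u) : G × G).2 = ((p, q) : G × G).1 from h3)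
      rw [e1, bmul_of_eq (show ((a * u, a) : G × G).2 = ((a, q) : G × G).1 from rfl)]
      simp [h3]
    · have e1 : bmul ((a, a * u) : G × G) (p, q) = (p * u⁻¹, q) := by
        rw [bmul_of_lt (show ((a, a * u) : G × G).2 < ((p, q) : G × G).1 from h3)]
        simp [mul_inv_rev, mul_assoc]
      have h4 : a < p * u⁻¹ := by
        have := mul_lt_mul_left h3 u⁻¹
        simpa [mul_assoc] using this
      rw [e1, bmul_of_lt (show ((a * u, a) : G × G).2 < ((p * u⁻¹, q) : G × G).1 from h4)]
      simp [mul_assoc]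
  -- Symmetric fact for the second coordinate.
  have hUD' : ∀ p q : G, b < q → bmul (bmul (p, q) (b * u, b)) (b, b * u) = (p, q) := by
    intro p q h
    have h2 : b * u ≤ q := hsucc b q h
    rcases eq_or_lt_of_le h2 with h3 | h3
    · have e1 : bmul ((p, q) : G × G) (b * u, b) = (p, b) :=
        bmul_of_eq (show ((p, q) : G × G).2 = ((b * u, b) : G × G).1 from h3.symm)
      rw [e1, bmul_of_eq (show ((p, b) : G × G).2 = ((b, b * u) : G × G).1 from rfl)]
      simp [h3]
    · have e1 : bmul ((p, q) : G × G) (b * u, b) = (p, q * u⁻¹) := by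
        rw [bmul_of_gt (show ((b * u, b) : G × G).1 < ((p, q) : G × G).2 from h3)]
        simp [mul_inv_rev, mul_assoc]
      have h4 : b < q * u⁻¹ := by
        have := mul_lt_mul_left h3 u⁻¹
        simpa [mul_assoc] using this
      rw [e1, bmul_of_gt (show ((b, b * u) : G × G).1 < ((p, q * u⁻¹) : G × G).2 from h4)]
      simp [mul_assoc]
  -- `L0` collapses the lower ray to the single value `(1, b * u⁻¹)`.
  have hT : ∀ c d : G, d < b → b * d⁻¹ * c = a → L0 (c, d) = (1, b * u⁻¹) := by
    intro c d h1 h2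
    have hbd : (1 : G) < b * d⁻¹ := gen1 _ _ h1
    have hca : c < a := h2 ▸ gen3 (b * d⁻¹) c hbd
    have hca2 : c ≤ a * u⁻¹ := by
      have := mul_le_mul_left (hsucc c a hca) u⁻¹
      simpa [mul_assoc] using this
    rcases eq_or_lt_of_le hca2 with h3 | h3
    · rw [hL0def]; dsimp only
      rw [bmul_of_eq (show ((1, a * u⁻¹) : G × G).2 = ((c, d) : G × G).1 from h3.symm)]
      have hd : d = b * u⁻¹ := by
        have h4 : b * d⁻¹ * (a * u⁻¹) = a := by rw [← h3]; exact h2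
        have h5 : b * d⁻¹ = a * (a * u⁻¹)⁻¹ := by
          have := congrArg (fun z : G => z * (a * u⁻¹)⁻¹) h4
          simpa [mul_assoc] using this
        have h6 : b * d⁻¹ = u := by
          rw [h5, mul_inv_rev, inv_inv, ← mul_assoc]
          rw [← hcomm a]
          simp [mul_assoc]
        have h7 : d = u⁻¹ * b := by
          have := congrArg (fun z : G => z⁻¹ * b) h6
          simpa [mul_inv_rev, mul_assoc] using this
        rw [h7, hcommi b]
      rw [hd]
    · rw [hL0def]; dsimp only
      rw [bmul_of_gt (show ((c, d) : G × G).1 < ((1, a * u⁻¹) : G × G).2 from h3)]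
      have hc : c = d * b⁻¹ * a := by
        have := congrArg (fun z : G => (b * d⁻¹)⁻¹ * z) h2
        simpa [mul_inv_rev, mul_assoc] using this
      have hfin : a * u⁻¹ * c⁻¹ * d = b * u⁻¹ := by
        rw [hc, ← hcommi a]
        simp [mul_inv_rev, mul_assoc, hcommi b]
      rw [hfin]
  -- The three open sets.
  have hCopen : IsOpen {x : G × G | ¬ F x = E x} := (isClosed_eq hFcont hEcont).isOpen_compl
  have hC'open : IsOpen {x : G × G | ¬ F' x = E x} := (isClosed_eq hF'cont hEcont).isOpen_compl
  have hVopen : IsOpen {x : G × G | ¬ L0 x = (1, b * u⁻¹)} :=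
    (isClosed_eq hL0cont continuous_const).isOpen_compl
  have key : ({((a, b) : G × G)} : Set (G × G)) =
      {x : G × G | ¬ F x = E x} ∩ {x : G × G | ¬ F' x = E x} ∩
        {x : G × G | ¬ L0 x = (1, b * u⁻¹)} := by
    have hEs : E (a, b) = (a, b) := by
      rw [hEdef]; dsimp only
      rw [bmul_of_eq (show ((a, b) : G × G).2 = ((b, b) : G × G).1 from rfl)]
      rw [bmul_of_eq (show ((a, a) : G × G).2 = ((a, b) : G × G).1 from rfl)]
    have haau : a < a * u := gen4 a u hu
    have hbbu : b < b * u := gen4 b u hu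
    ext ⟨c, d⟩
    simp only [Set.mem_singleton_iff, Set.mem_inter_iff, Set.mem_setOf_eq, Prod.mk.injEq]
    constructor
    · rintro ⟨h1, h2⟩
      rw [h1, h2]
      refine ⟨⟨?_, ?_⟩, ?_⟩
      · rw [hFdef]; dsimp only
        rw [hEs]
        rw [bmul_of_gt (show ((a, b) : G × G).1 < ((a, a * u) : G × G).2 from haau)]
        rw [bmul_of_eq (show ((a * u, a) : G × G).2 = (((a, b) : G × G).1,
          ((a, a * u) : G × G).2 * ((a, b) : G × G).1⁻¹ * ((a, b) : G × G).2).1 from rfl)]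
        intro hh
        exact (by simpa using haau.ne' : ¬ a * u = a) (by simpa using congrArg Prod.fst hh)
      · rw [hF'def]; dsimp only
        rw [hEs]
        rw [bmul_of_lt (show ((a, b) : G × G).2 < ((b * u, b) : G × G).1 from hbbu)]
        rw [bmul_of_eq (show ((((b * u, b) : G × G).1 * ((a, b) : G × G).2⁻¹ *
          ((a, b) : G × G).1, ((b * u, b) : G × G).2) : G × G).2 =
          ((b, b * u) : G × G).1 from rfl)]
        intro hh
        exact (by simpa using hbbu.ne' : ¬ b * u = b) (by simpa using congrArg Prod.snd hh)
      · rw [hL0def]; dsimp only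
        have hau : a * u⁻¹ < a := by
          have h2' : a * u⁻¹ < u * (a * u⁻¹) := gen3 u _ hu
          have h3 : u * (a * u⁻¹) = a := by
            rw [← mul_assoc, hcomm a]
            simp [mul_assoc]
          rwa [h3] at h2'
        rw [bmul_of_lt (show ((1, a * u⁻¹) : G × G).2 < ((a, b) : G × G).1 from hau)]
        intro hh
        have hb : b = b * u⁻¹ := by simpa using congrArg Prod.snd hh
        have hblt : b * u⁻¹ < b := by
          have h2' : b * u⁻¹ < u * (b * u⁻¹) := gen3 u _ hu
          have h3 : u * (b * u⁻¹) = b := by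
            rw [← mul_assoc, hcomm b]
            simp [mul_assoc]
          rwa [h3] at h2'
        exact hblt.ne hb.symm
    · rintro ⟨⟨hc1, hc2⟩, hv⟩
      obtain ⟨hb1, hb2, hchar⟩ := hE c d
      have hpa : (E (c, d)).1 = a := by
        by_contra hne
        have hlt : a < (E (c, d)).1 := hb1.lt_of_ne (Ne.symm hne)
        apply hc1
        rw [hFdef]; dsimp only
        have := hUD (E (c, d)).1 (E (c, d)).2 hlt
        simpa using this
      have hqb : (E (c, d)).2 = b := by
        by_contra hne
        have hlt : b < (E (c, d)).2 := hb2.lt_of_ne (Ne.symm hne)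
        apply hc2
        rw [hF'def]; dsimp only
        have := hUD' (E (c, d)).1 (E (c, d)).2 hlt
        simpa using this
      have hEab : E (c, d) = (a, b) := Prod.ext hpa hqb
      rcases hchar hEab with h | ⟨h1, h2⟩
      · exact h
      · exact absurd (hT c d h1 h2) hv
  rw [key]
  exact (hCopen.inter hC'open).inter hVopen
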